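/- Let G be a finite DAG with ReLU node semantics a_u = ReLU(∑_{v→u} k_{v,u} a_v) for non-leaf u, and suppose all non-leaf nodes with positive pre-activation on paths to root t are strictly positive (so gradients are well-defined via path sums over activated nodes). Let G' = G[V∖{w}] be the induced subgraph obtained by detaching a non-root node w, with activations a'_u recomputed by the same recursion (leaves keep their original activations). If along every path from any leaf to t the detachment only decreases pre-activations of nodes that remain strictly positive, then a'_t = a_t − attr_{w,t}, where attr_{w,t} = a_w · ∇_{a_t} a_w is computed in the original graph restricted to paths avoiding recomputation through w. -/

import Mathlib

open Finset

noncomputable section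
open scoped Classical

/-- Product of edge weights along a list of vertices. -/
def pathProd {n : ℕ} (k : Fin n → Fin n → ℝ) : List (Fin n) → ℝ
  | [] => 1
  | [_] => 1
  | i :: j :: rest => k i j * pathProd k (j :: rest)

/-- Vertex sets of potential (increasing) paths from `v` to `t`. -/
def pathFinsets {n : ℕ} (v t : Fin n) : Finset (Finset (Fin n)) :=
  Finset.univ.powerset.filter (fun S => v ∈ S ∧ t ∈ S ∧ ∀ w ∈ S, v ≤ w ∧ w ≤ t)

/-- Sum over all directed paths from `v` to `t` of the product of edge weights. -/
def pathSum {n : ℕ} (k : Fin n → Fin n → ℝ) (v t : Fin n) : ℝ :=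
  ∑ S ∈ pathFinsets v t, pathProd k (S.sort (· ≤ ·))

/-- There exists a genuine directed path (all edges present) from `v` to `t`. -/
def hasPath {n : ℕ} (k : Fin n → Fin n → ℝ) (v t : Fin n) : Prop :=
  ∃ S ∈ pathFinsets v t, (S.sort (· ≤ ·)).Chain' (fun i j => k i j ≠ 0)

/-- Path sum restricted to paths all of whose intermediate nodes are activated. -/
def actPathSum {n : ℕ} (k : Fin n → Fin n → ℝ) (a : Fin n → ℝ) (v t : Fin n) : ℝ :=
  ∑ S ∈ (pathFinsets v t).filter (fun S => ∀ w ∈ S, w ≠ v → w ≠ t → 0 < a w),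
    pathProd k (S.sort (· ≤ ·))

/-- Existence of an activated path (edges present, intermediate nodes activated). -/
def hasActPath {n : ℕ} (k : Fin n → Fin n → ℝ) (a : Fin n → ℝ) (v t : Fin n) : Prop :=
  ∃ S ∈ pathFinsets v t, (S.sort (· ≤ ·)).Chain' (fun i j => k i j ≠ 0) ∧
    ∀ w ∈ S, w ≠ v → w ≠ t → 0 < a w

lemma mem_pathFinsets {n : ℕ} {v t : Fin n} {S : Finset (Fin n)} :
    S ∈ pathFinsets v t ↔ v ∈ S ∧ t ∈ S ∧ ∀ w ∈ S, v ≤ w ∧ w ≤ t := by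
  simp [pathFinsets]

lemma sorted_le_getLast {n : ℕ} {l : List (Fin n)} (h : l.Pairwise (· ≤ ·)) {x : Fin n}
    (hx : x ∈ l) (hne : l ≠ []) : x ≤ l.getLast hne := by
  induction l with
  | nil => simp at hx
  | cons a l ih =>
    rcases List.mem_cons.1 hx with rfl | hx
    · cases l with
      | nil => simp
      | cons b l' =>
        rw [List.getLast_cons (by simp)]
        exact le_trans (List.rel_of_pairwise_cons h (List.getLast_mem _)) le_rfl
    · have hl : l ≠ [] := List.ne_nil_of_mem hx
      rw [List.getLast_cons hl]
      exact ih h.of_cons hx hl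

lemma pathProd_append {n : ℕ} (k : Fin n → Fin n → ℝ) (l : List (Fin n)) (u : Fin n)
    (hne : l ≠ []) : pathProd k (l ++ [u]) = pathProd k l * k (l.getLast hne) u := by
  induction l with
  | nil => simp at hne
  | cons a l ih =>
    cases l with
    | nil => simp [pathProd]
    | cons b l' =>
      have h2 : (b :: l') ≠ [] := by simp
      show k a b * pathProd k ((b :: l') ++ [u])
          = pathProd k (a :: b :: l') * k ((a :: b :: l').getLast hne) u
      rw [ih h2, List.getLast_cons h2]
      show k a b * (pathProd k (b :: l') * k ((b :: l').getLast h2) u)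
          = (k a b * pathProd k (b :: l')) * k ((b :: l').getLast h2) u
      ring

lemma sort_insert_max {n : ℕ} {S : Finset (Fin n)} {u : Fin n}
    (h : ∀ x ∈ S, x < u) :
    (insert u S).sort (· ≤ ·) = S.sort (· ≤ ·) ++ [u] := by
  have hu : u ∉ S := fun hmem => lt_irrefl u (h u hmem)
  have hperm : List.Perm ((insert u S).sort (· ≤ ·)) (S.sort (· ≤ ·) ++ [u]) := by
    refine List.Perm.trans ?_ (List.perm_append_singleton u _).symm
    rw [← Multiset.coe_eq_coe, Finset.sort_eq, Finset.insert_val_of_notMem hu,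
      ← Multiset.cons_coe, Finset.sort_eq]
  have hs2 : List.Pairwise (· ≤ ·) (S.sort (· ≤ ·) ++ [u]) := by
    rw [List.pairwise_append]
    refine ⟨Finset.pairwise_sort _ _, by simp, ?_⟩
    intro x hx y hy
    simp at hy; subst hy
    exact le_of_lt (h x ((Finset.mem_sort _).1 hx))
  exact List.Perm.eq_of_pairwise' (Finset.pairwise_sort _ _) hs2 hperm

lemma pathProd_insert_max {n : ℕ} (k : Fin n → Fin n → ℝ) {S : Finset (Fin n)} {v u : Fin n}
    (hv : v ∈ S) (hmax : ∀ x ∈ S, x ≤ v) (hlt : ∀ x ∈ S, x < u) :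
    pathProd k ((insert u S).sort (· ≤ ·)) = pathProd k (S.sort (· ≤ ·)) * k v u := by
  rw [sort_insert_max hlt]
  have hne : S.sort (· ≤ ·) ≠ [] := by
    intro h
    have := (Finset.mem_sort (α := Fin n) (· ≤ ·)).2 hv
    rw [h] at this; simp at this
  have hg := (S.sort (· ≤ ·)).getLast_mem hne
  have hgS : (S.sort (· ≤ ·)).getLast hne ∈ S := (Finset.mem_sort _).1 hg
  have h1 : (S.sort (· ≤ ·)).getLast hne ≤ v := hmax _ hgS
  have h2 : v ≤ (S.sort (· ≤ ·)).getLast hne :=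
    sorted_le_getLast (Finset.pairwise_sort _ _) ((Finset.mem_sort _).2 hv) hne
  rw [pathProd_append k _ u hne, le_antisymm h1 h2]

lemma pathFinsets_self {n : ℕ} (w : Fin n) : pathFinsets w w = {{w}} := by
  ext S
  simp only [mem_pathFinsets, Finset.mem_singleton]
  constructor
  · rintro ⟨hw, -, hb⟩
    apply Finset.eq_singleton_iff_unique_mem.2 ⟨hw, fun x hx => le_antisymm (hb x hx).2 (hb x hx).1⟩
  · rintro rfl; simp

lemma pathSum_self {n : ℕ} (k : Fin n → Fin n → ℝ) (w : Fin n) : pathSum k w w = 1 := by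
  rw [pathSum, pathFinsets_self, Finset.sum_singleton, Finset.sort_singleton]
  rfl

lemma pathSum_rec {n : ℕ} (k : Fin n → Fin n → ℝ) (htopo : ∀ i j, k i j ≠ 0 → i < j)
    (w u : Fin n) (hu : u ≠ w) :
    pathSum k w u = ∑ v, pathSum k w v * k v u := by
  have hzero : ∀ v : Fin n, ¬ (v < u) → pathSum k w v * k v u = 0 := by
    intro v hv
    rcases eq_or_ne (k v u) 0 with h | h
    · simp [h]
    · exact absurd (htopo v u h) hv
  rw [← Finset.sum_filter_of_ne (s := Finset.univ)
    (f := fun v => pathSum k w v * k v u) (p := fun v => v < u)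
    (by intro v _ h; by_contra hc; exact h (hzero v hc))]
  -- now RHS over filter (· < u)
  have decomp : pathFinsets w u =
      (Finset.univ.filter (fun v => v < u)).biUnion
        (fun v => (pathFinsets w v).image (insert u)) := by
    ext S
    simp only [Finset.mem_biUnion, Finset.mem_filter, Finset.mem_univ, true_and,
      Finset.mem_image]
    constructor
    · intro hS
      rcases mem_pathFinsets.1 hS with ⟨hwS, huS, hb⟩
      have hwne : w ∈ S.erase u := Finset.mem_erase.2 ⟨Ne.symm hu, hwS⟩
      have hne : (S.erase u).Nonempty := ⟨w, hwne⟩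
      set v := (S.erase u).max' hne with hv
      have hvS : v ∈ S.erase u := Finset.max'_mem _ hne
      have hvu : v ≠ u := (Finset.mem_erase.1 hvS).1
      have hvltu : v < u := lt_of_le_of_ne (hb v (Finset.mem_of_mem_erase hvS)).2 hvu
      refine ⟨v, hvltu, S.erase u, ?_, Finset.insert_erase huS⟩
      refine mem_pathFinsets.2 ⟨hwne, hvS, ?_⟩
      intro x hx
      exact ⟨(hb x (Finset.mem_of_mem_erase hx)).1, Finset.le_max' _ _ hx⟩
    · rintro ⟨v, hvu, S', hS', rfl⟩
      rcases mem_pathFinsets.1 hS' with ⟨hwS, hvS, hb⟩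
      refine mem_pathFinsets.2 ⟨Finset.mem_insert_of_mem hwS, Finset.mem_insert_self _ _, ?_⟩
      intro x hx
      rcases Finset.mem_insert.1 hx with rfl | hx
      · exact ⟨le_of_lt (lt_of_le_of_lt (hb w hwS).2 hvu), le_rfl⟩
      · exact ⟨(hb x hx).1, le_of_lt (lt_of_le_of_lt (hb x hx).2 hvu)⟩
  rw [pathSum, decomp]
  rw [Finset.sum_biUnion]
  · apply Finset.sum_congr rfl
    intro v hv
    have hvu : v < u := (Finset.mem_filter.1 hv).2
    rw [Finset.sum_image]
    · rw [pathSum, Finset.sum_mul]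
      apply Finset.sum_congr rfl
      intro S' hS'
      rcases mem_pathFinsets.1 hS' with ⟨hwS, hvS, hb⟩
      exact pathProd_insert_max k hvS (fun x hx => (hb x hx).2)
        (fun x hx => lt_of_le_of_lt (hb x hx).2 hvu)
    · intro S1 h1 S2 h2 heq
      rcases mem_pathFinsets.1 h1 with ⟨-, -, hb1⟩
      rcases mem_pathFinsets.1 h2 with ⟨-, -, hb2⟩
      have hu1 : u ∉ S1 := fun h => absurd (hb1 u h).2 (not_le_of_gt hvu)
      have hu2 : u ∉ S2 := fun h => absurd (hb2 u h).2 (not_le_of_gt hvu)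
      rw [← Finset.erase_insert hu1, ← Finset.erase_insert hu2, heq]
  · intro v1 h1 v2 h2 hne
    simp only [Finset.disjoint_left, Finset.mem_image]
    rintro S ⟨S1, hS1, rfl⟩ ⟨S2, hS2, heq⟩
    rcases mem_pathFinsets.1 hS1 with ⟨-, hv1, hb1⟩
    rcases mem_pathFinsets.1 hS2 with ⟨-, hv2, hb2⟩
    have hlt1 : v1 < u := (Finset.mem_filter.1 h1).2
    have hlt2 : v2 < u := (Finset.mem_filter.1 h2).2
    have hu1 : u ∉ S1 := fun h => absurd (hb1 u h).2 (not_le_of_gt hlt1)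
    have hu2 : u ∉ S2 := fun h => absurd (hb2 u h).2 (not_le_of_gt hlt2)
    have : S1 = S2 := by rw [← Finset.erase_insert hu1, ← Finset.erase_insert hu2, heq]
    subst this
    exact hne (le_antisymm (hb2 v1 hv1).2 (hb1 v2 hv2).2)

lemma hasPath_self {n : ℕ} (k : Fin n → Fin n → ℝ) (t : Fin n) : hasPath k t t := by
  refine ⟨{t}, mem_pathFinsets.2 ⟨by simp, by simp, by simp⟩, ?_⟩
  rw [Finset.sort_singleton]
  exact List.isChain_singleton _

lemma hasPath_extend {n : ℕ} {k : Fin n → Fin n → ℝ} (htopo : ∀ i j, k i j ≠ 0 → i < j)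
    {v u t : Fin n} (hk : k v u ≠ 0) (hp : hasPath k u t) : hasPath k v t := by
  rcases hp with ⟨S, hS, hchain⟩
  rcases mem_pathFinsets.1 hS with ⟨huS, htS, hb⟩
  have hvu : v < u := htopo v u hk
  have hvS : v ∉ S := fun h => absurd (hb v h).1 (not_le_of_gt hvu)
  refine ⟨insert v S, mem_pathFinsets.2 ⟨Finset.mem_insert_self _ _,
    Finset.mem_insert_of_mem htS, ?_⟩, ?_⟩
  · intro x hx
    rcases Finset.mem_insert.1 hx with rfl | hx
    · exact ⟨le_rfl, le_trans (le_of_lt hvu) (hb u huS).2⟩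
    · exact ⟨le_trans (le_of_lt hvu) (hb x hx).1, (hb x hx).2⟩
  · rw [Finset.sort_insert _ (fun b hb' => le_trans (le_of_lt hvu)
      (hb b hb').1) hvS]
    rw [List.Chain', List.isChain_cons]
    constructor
    · intro b hbmem
      have hsort : S.sort (· ≤ ·) = u :: (S.erase u).sort (· ≤ ·) := by
        conv_lhs => rw [← Finset.insert_erase huS]
        exact Finset.sort_insert _ (fun b hb' => (hb b (Finset.mem_of_mem_erase hb')).1)
          (Finset.notMem_erase u S)
      rw [hsort] at hbmem
      simp at hbmem
      subst hbmem
      exact hk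
    · exact hchain

/-- the causal effect of detaching a node w from a ReLU computation
graph, when no ReLU gate changes state (pre-activations on paths to the root only
decrease but stay strictly positive), is exactly the attribution score of w:
a'_t = a_t − a_w · ∇_{a_t} a_w. -/
theorem detach_effect_equals_attribution {n : ℕ} (k : Fin n → Fin n → ℝ)
    (a a' : Fin n → ℝ) (t w : Fin n)
    (htopo : ∀ i j, k i j ≠ 0 → i < j)
    (hwt : w ≠ t)
    (hrec : ∀ u, (∃ v, k v u ≠ 0) → a u = max (∑ v, k v u * a v) 0)
    (hpos : ∀ u, (∃ v, k v u ≠ 0) → hasPath k u t → 0 < ∑ v, k v u * a v)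
    (hrec' : ∀ u, u ≠ w → (∃ v, k v u ≠ 0) →
      a' u = max (∑ v, if v = w then 0 else k v u * a' v) 0)
    (hleaf' : ∀ u, (∀ v, k v u = 0) → a' u = a u)
    (hmono : ∀ u, u ≠ w → (∃ v, k v u ≠ 0) → hasPath k u t →
      (∑ v, if v = w then 0 else k v u * a' v) ≤ (∑ v, k v u * a v) ∧
      0 < ∑ v, if v = w then 0 else k v u * a' v) :
    a' t = a t - a w * pathSum k w t := by
  have key : ∀ (N : ℕ) (u : Fin n), u.val < N → u ≠ w → hasPath k u t →
      a u - a' u = a w * pathSum k w u := by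
    intro N
    induction N with
    | zero => intro u hu; exact absurd hu (Nat.not_lt_zero _)
    | succ N ih =>
      intro u huN huw hup
      by_cases hleaf : ∀ v, k v u = 0
      · rw [hleaf' u hleaf, pathSum_rec k htopo w u huw]
        simp [hleaf]
      · push_neg at hleaf
        have hedge : ∃ v, k v u ≠ 0 := hleaf
        have ha : a u = ∑ v, k v u * a v := by
          rw [hrec u hedge]; exact max_eq_left (le_of_lt (hpos u hedge hup))
        have ha' : a' u = ∑ v, if v = w then 0 else k v u * a' v := by
          rw [hrec' u huw hedge]
          exact max_eq_left (le_of_lt (hmono u huw hedge hup).2)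
        rw [ha, ha', ← Finset.sum_sub_distrib]
        rw [pathSum_rec k htopo w u huw, Finset.mul_sum]
        apply Finset.sum_congr rfl
        intro v _
        by_cases hvw : v = w
        · subst hvw
          simp [pathSum_self]
          ring
        · simp only [if_neg hvw]
          rw [← mul_sub]
          by_cases hkv : k v u = 0
          · simp [hkv]
          · have hvlt : v < u := htopo v u hkv
            rw [ih v (by have := hvlt; omega) hvw (hasPath_extend htopo hkv hup)]
            ring
  have ht := key n t t.isLt (Ne.symm hwt) (hasPath_self k t)
  linarith
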